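/- The binary tree space X_T has the alternative Daugavet property: for every x in the unit sphere of X_T and every slice S of the closed unit ball B_{X_T}, sup_{y∈S} max_{θ∈{-1,1}} ‖x + θy‖ = 2. -/
import Mathlib


open Metric Filter Topology

/-- Nodes of the infinite binary tree: finite sequences over `{0,1}`. -/
abbrev TreeNode := List Bool

/-- A finite set of nodes is a chain if its elements are pairwise comparable for the
initial-segment (prefix) order. -/
def IsFinChain (A : Finset TreeNode) : Prop := ∀ s ∈ A, ∀ t ∈ A, s <+: t ∨ t <+: s

/-- A set of nodes is a chain if its elements are pairwise comparable. -/
def IsSetChain (A : Set TreeNode) : Prop := ∀ s ∈ A, ∀ t ∈ A, s <+: t ∨ t <+: s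

/-- A branch is a maximal chain of the binary tree. -/
def IsBranch (β : Set TreeNode) : Prop :=
  IsSetChain β ∧ ∀ γ : Set TreeNode, IsSetChain γ → β ⊆ γ → γ = β

/-- A set of nodes is an antichain if its elements are pairwise incomparable. -/
def IsTreeAntichain (A : Set TreeNode) : Prop :=
  ∀ s ∈ A, ∀ t ∈ A, s ≠ t → ¬ s <+: t ∧ ¬ t <+: s

/-- The binary tree norm of a finitely supported function on the tree: the supremum over
chains `A` of `∑_{t ∈ A} |c t|`. -/
noncomputable def treeNorm (c : TreeNode →₀ ℝ) : ℝ :=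
  sSup {r | ∃ A : Finset TreeNode, IsFinChain A ∧ r = ∑ t ∈ A, |c t|}

/-- The slice of a set `A` determined by a functional `f` and `δ > 0`. -/
def ballSlice {X : Type*} [NormedAddCommGroup X] [NormedSpace ℝ X]
    (A : Set X) (f : X →L[ℝ] ℝ) (δ : ℝ) : Set X :=
  {y ∈ A | sSup (f '' A) - δ < f y}

namespace BTaux

lemma abs_add_same_sign {a b : ℝ} (h : 0 ≤ a * b) : |a + b| = |a| + |b| := by
  rcases le_or_gt 0 a with ha | ha
  · rcases le_or_gt 0 b with hb | hb
    · rw [abs_of_nonneg ha, abs_of_nonneg hb, abs_of_nonneg (add_nonneg ha hb)]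
    · have ha0 : a = 0 := by nlinarith
      simp [ha0]
  · rcases le_or_gt 0 b with hb | hb
    · have hb0 : b = 0 := by nlinarith
      simp [hb0]
    · rw [abs_of_neg ha, abs_of_neg hb, abs_of_neg (by linarith)]; ring

lemma cons_inj (b : Bool) : Function.Injective (fun s : TreeNode => b :: s) :=
  fun s t h => by simpa using h

lemma nil_notin_range (b : Bool) :
    ([] : TreeNode) ∉ Set.range (fun s : TreeNode => b :: s) := by
  rintro ⟨s, hs⟩; simp at hs

lemma cons_notin_range {b b' : Bool} (h : b' ≠ b) (s : TreeNode) :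
    (b' :: s : TreeNode) ∉ Set.range (fun u : TreeNode => b :: u) := by
  rintro ⟨u, hu⟩
  simp only [List.cons.injEq] at hu
  exact h hu.1.symm

def chainSums (c : TreeNode →₀ ℝ) : Set ℝ :=
  {r | ∃ A : Finset TreeNode, IsFinChain A ∧ r = ∑ t ∈ A, |c t|}

lemma zero_mem_chainSums (c : TreeNode →₀ ℝ) : (0:ℝ) ∈ chainSums c :=
  ⟨∅, fun s hs => absurd hs (Finset.notMem_empty s), by simp⟩

lemma chainSums_bdd (c : TreeNode →₀ ℝ) : BddAbove (chainSums c) := by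
  refine ⟨∑ t ∈ c.support, |c t|, ?_⟩
  rintro r ⟨A, hA, rfl⟩
  have h1 : ∑ t ∈ A, |c t| = ∑ t ∈ A ∩ c.support, |c t| := by
    refine (Finset.sum_subset Finset.inter_subset_left ?_).symm
    intro t ht hts
    have hct : c t = 0 := by
      by_contra h
      exact hts (Finset.mem_inter.mpr ⟨ht, Finsupp.mem_support_iff.mpr h⟩)
    simp [hct]
  rw [h1]
  exact Finset.sum_le_sum_of_subset_of_nonneg Finset.inter_subset_right
    (fun t _ _ => abs_nonneg _)

lemma treeNorm_eq (c : TreeNode →₀ ℝ) : treeNorm c = sSup (chainSums c) := rfl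

lemma sum_le_treeNorm {c : TreeNode →₀ ℝ} {A : Finset TreeNode} (hA : IsFinChain A) :
    ∑ t ∈ A, |c t| ≤ treeNorm c :=
  le_csSup (chainSums_bdd c) ⟨A, hA, rfl⟩

lemma treeNorm_nonneg (c : TreeNode →₀ ℝ) : 0 ≤ treeNorm c :=
  le_csSup (chainSums_bdd c) (zero_mem_chainSums c)

lemma treeNorm_le {c : TreeNode →₀ ℝ} {r : ℝ}
    (h : ∀ A : Finset TreeNode, IsFinChain A → ∑ t ∈ A, |c t| ≤ r) : treeNorm c ≤ r :=
  csSup_le ⟨0, zero_mem_chainSums c⟩ (by rintro s ⟨A, hA, rfl⟩; exact h A hA)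

def GoodP (z : TreeNode →₀ ℝ) : Prop :=
  (∀ A : Finset TreeNode, IsFinChain A → ∑ t ∈ A, |z t| ≤ 1) ∧
  (∀ A : Finset TreeNode, IsFinChain A →
    ∃ t₀ : TreeNode, (∀ s ∈ A, s <+: t₀ ∨ t₀ <+: s) ∧ |z t₀| = 1)

lemma goodP_single {θ : ℝ} (hθ : |θ| = 1) : GoodP (Finsupp.single ([] : TreeNode) θ) := by
  constructor
  · intro A _
    have h : ∀ t ∈ A, |Finsupp.single ([] : TreeNode) θ t| =
        if ([]:TreeNode) = t then 1 else 0 := by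
      intro t _
      rw [Finsupp.single_apply]
      split <;> simp [hθ]
    rw [Finset.sum_congr rfl h, Finset.sum_ite_eq]
    split <;> norm_num
  · intro A _
    exact ⟨[], fun s _ => Or.inr (List.nil_prefix (l := s)), by simp [hθ]⟩



lemma exists_root (F : (TreeNode →₀ ℝ) →ₗ[ℝ] ℝ) :
    ∃ z : TreeNode →₀ ℝ, GoodP z ∧ 0 ≤ F z ∧
      ∀ a : ℝ, a * F (Finsupp.single ([]:TreeNode) 1) ≤ |a| * F z := by
  by_cases h : 0 ≤ F (Finsupp.single ([]:TreeNode) 1)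
  · refine ⟨Finsupp.single [] 1, goodP_single (by norm_num), h, fun a => ?_⟩
    exact mul_le_mul_of_nonneg_right (le_abs_self a) h
  · refine ⟨Finsupp.single [] (-1), goodP_single (by norm_num), ?_, fun a => ?_⟩
    · rw [show Finsupp.single ([]:TreeNode) (-1:ℝ) = -Finsupp.single ([]:TreeNode) (1:ℝ) by
        rw [Finsupp.single_neg], map_neg]
      linarith [lt_of_not_ge h]
    · have hz : F (Finsupp.single ([]:TreeNode) (-1:ℝ)) = -F (Finsupp.single ([]:TreeNode) (1:ℝ)) := by
        rw [show Finsupp.single ([]:TreeNode) (-1:ℝ) = -Finsupp.single ([]:TreeNode) (1:ℝ) by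
          rw [Finsupp.single_neg], map_neg]
      have h1 : a * F (Finsupp.single ([]:TreeNode) 1) = (-a) * F (Finsupp.single ([]:TreeNode) (-1:ℝ)) := by
        rw [hz]; ring
      rw [h1, ← abs_neg a]
      exact mul_le_mul_of_nonneg_right (le_abs_self (-a)) (by rw [hz]; linarith [lt_of_not_ge h])

lemma head_lemma (A : Finset TreeNode) (hA : IsFinChain A) :
    ∃ b : Bool, ∀ t ∈ A, t = [] ∨ ∃ s, t = b :: s := by
  by_cases h : ∃ s : TreeNode, false :: s ∈ A
  · obtain ⟨s₀, hs₀⟩ := h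
    refine ⟨false, fun t ht => ?_⟩
    rcases t with _ | ⟨b', s⟩
    · exact Or.inl rfl
    · have hb : b' = false := by
        rcases hA _ hs₀ _ ht with hp | hp
        · exact (List.cons_prefix_cons.mp hp).1.symm
        · exact (List.cons_prefix_cons.mp hp).1
      exact Or.inr ⟨s, by rw [hb]⟩
  · refine ⟨true, fun t ht => ?_⟩
    rcases t with _ | ⟨b', s⟩
    · exact Or.inl rfl
    · cases b'
      · exact absurd ⟨s, ht⟩ h
      · exact Or.inr ⟨s, rfl⟩

lemma goodP_glue {z0 z1 : TreeNode →₀ ℝ} (h0 : GoodP z0) (h1 : GoodP z1) :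
    GoodP (Finsupp.mapDomain (fun s : TreeNode => false :: s) z0 +
           Finsupp.mapDomain (fun s : TreeNode => true :: s) z1) := by
  classical
  set w := Finsupp.mapDomain (fun s : TreeNode => false :: s) z0 +
           Finsupp.mapDomain (fun s : TreeNode => true :: s) z1 with hwdef
  have hw_nil : w ([] : TreeNode) = 0 := by
    rw [hwdef, Finsupp.add_apply,
      Finsupp.mapDomain_notin_range _ _ (nil_notin_range false),
      Finsupp.mapDomain_notin_range _ _ (nil_notin_range true), add_zero]
  have hw_f : ∀ s : TreeNode, w (false :: s) = z0 s := by
    intro s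
    rw [hwdef, Finsupp.add_apply,
      Finsupp.mapDomain_notin_range z1 _ (cons_notin_range (b' := false) (b := true) (by simp) s),
      add_zero]
    exact Finsupp.mapDomain_apply (cons_inj false) z0 s
  have hw_t : ∀ s : TreeNode, w (true :: s) = z1 s := by
    intro s
    rw [hwdef, Finsupp.add_apply,
      Finsupp.mapDomain_notin_range z0 _ (cons_notin_range (b' := true) (b := false) (by simp) s),
      zero_add]
    exact Finsupp.mapDomain_apply (cons_inj true) z1 s
  have main : ∀ (b : Bool) (zb : TreeNode →₀ ℝ), GoodP zb → (∀ s, w (b :: s) = zb s) →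
      ∀ A : Finset TreeNode, IsFinChain A → (∀ t ∈ A, t = [] ∨ ∃ s, t = b :: s) →
      (∑ t ∈ A, |w t| ≤ 1) ∧
        ∃ t₀ : TreeNode, (∀ s ∈ A, s <+: t₀ ∨ t₀ <+: s) ∧ |w t₀| = 1 := by
    intro b zb hzb hw A hA hall
    set C := A.preimage (fun s : TreeNode => b :: s) ((cons_inj b).injOn) with hC
    have hmemC : ∀ s : TreeNode, s ∈ C ↔ b :: s ∈ A := fun s => Finset.mem_preimage
    have hCchain : IsFinChain C := by
      intro s hs t ht
      rcases hA _ ((hmemC s).mp hs) _ ((hmemC t).mp ht) with hp | hp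
      · exact Or.inl (List.cons_prefix_cons.mp hp).2
      · exact Or.inr (List.cons_prefix_cons.mp hp).2
    have hvan : ∀ t ∈ A, t ∉ Set.range (fun s : TreeNode => b :: s) → |w t| = 0 := by
      intro t ht hrange
      rcases hall t ht with rfl | ⟨s, rfl⟩
      · rw [hw_nil]; simp
      · exact absurd ⟨s, rfl⟩ hrange
    have hsum : ∑ s ∈ C, |w (b :: s)| = ∑ t ∈ A, |w t| := by
      rw [hC]
      simpa using Finset.sum_preimage (fun s : TreeNode => b :: s) A
        ((cons_inj b).injOn) (fun t => |w t|) hvan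
    constructor
    · calc ∑ t ∈ A, |w t| = ∑ s ∈ C, |zb s| := by
            rw [← hsum]; exact Finset.sum_congr rfl fun s _ => by rw [hw]
        _ ≤ 1 := hzb.1 C hCchain
    · obtain ⟨t₀', ht₀'c, ht₀'v⟩ := hzb.2 C hCchain
      refine ⟨b :: t₀', ?_, by rw [hw]; exact ht₀'v⟩
      intro s hs
      rcases hall s hs with rfl | ⟨s', rfl⟩
      · exact Or.inl List.nil_prefix
      · rcases ht₀'c s' ((hmemC s').mpr hs) with hp | hp
        · exact Or.inl (List.cons_prefix_cons.mpr ⟨rfl, hp⟩)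
        · exact Or.inr (List.cons_prefix_cons.mpr ⟨rfl, hp⟩)
  constructor
  · intro A hA
    obtain ⟨b, hall⟩ := head_lemma A hA
    cases b
    · exact (main false z0 h0 hw_f A hA hall).1
    · exact (main true z1 h1 hw_t A hA hall).1
  · intro A hA
    obtain ⟨b, hall⟩ := head_lemma A hA
    cases b
    · exact (main false z0 h0 hw_f A hA hall).2
    · exact (main true z1 h1 hw_t A hA hall).2



lemma key_lemma : ∀ (N : ℕ) (c : TreeNode →₀ ℝ) (F : (TreeNode →₀ ℝ) →ₗ[ℝ] ℝ),
    (∀ t ∈ c.support, t.length < N) →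
    ∃ z : TreeNode →₀ ℝ, GoodP z ∧ 0 ≤ F z ∧ F c ≤ treeNorm c * F z := by
  intro N
  induction N with
  | zero =>
    intro c F hs
    have hc : c = 0 := by
      have hsupp : c.support = ∅ :=
        Finset.eq_empty_of_forall_notMem (fun t ht => absurd (hs t ht) (Nat.not_lt_zero _))
      exact Finsupp.support_eq_empty.mp hsupp
    obtain ⟨z, hz, hz0, -⟩ := exists_root F
    refine ⟨z, hz, hz0, ?_⟩
    rw [hc, map_zero]
    exact mul_nonneg (treeNorm_nonneg 0) hz0
  | succ N ih =>
    intro c F hs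
    classical
    set a := c ([] : TreeNode) with ha
    set c0 : TreeNode →₀ ℝ :=
      Finsupp.comapDomain (fun s : TreeNode => false :: s) c ((cons_inj false).injOn) with hc0
    set c1 : TreeNode →₀ ℝ :=
      Finsupp.comapDomain (fun s : TreeNode => true :: s) c ((cons_inj true).injOn) with hc1
    have hc0app : ∀ s : TreeNode, c0 s = c (false :: s) := fun s => rfl
    have hc1app : ∀ s : TreeNode, c1 s = c (true :: s) := fun s => rfl
    -- decomposition
    have hdec : c = Finsupp.single [] a +
        (Finsupp.mapDomain (fun s : TreeNode => false :: s) c0 +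
         Finsupp.mapDomain (fun s : TreeNode => true :: s) c1) := by
      ext t
      rw [Finsupp.add_apply, Finsupp.add_apply]
      rcases t with _ | ⟨b, s⟩
      · rw [Finsupp.single_eq_same,
          Finsupp.mapDomain_notin_range _ _ (nil_notin_range false),
          Finsupp.mapDomain_notin_range _ _ (nil_notin_range true)]
        simp [ha]
      · cases b
        · rw [Finsupp.single_apply, if_neg (by simp),
            Finsupp.mapDomain_notin_range c1 _
              (cons_notin_range (b' := false) (b := true) (by simp) s)]
          have := Finsupp.mapDomain_apply (cons_inj false) c0 s
          rw [this, hc0app]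
          ring
        · rw [Finsupp.single_apply, if_neg (by simp),
            Finsupp.mapDomain_notin_range c0 _
              (cons_notin_range (b' := true) (b := false) (by simp) s)]
          have := Finsupp.mapDomain_apply (cons_inj true) c1 s
          rw [this, hc1app]
          ring
    -- subtree norm bound
    have hsub : ∀ (b : Bool) (cb : TreeNode →₀ ℝ), (∀ s, cb s = c (b :: s)) →
        treeNorm cb ≤ treeNorm c - |a| := by
      intro b cb hcb
      refine treeNorm_le (fun A hA => ?_)
      have hchain : IsFinChain (insert [] (A.image (fun s : TreeNode => b :: s))) := by
        intro s hsm t htm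
        rcases Finset.mem_insert.mp hsm with rfl | hsm
        · exact Or.inl List.nil_prefix
        rcases Finset.mem_insert.mp htm with rfl | htm
        · exact Or.inr List.nil_prefix
        obtain ⟨s', hs', rfl⟩ := Finset.mem_image.mp hsm
        obtain ⟨t', ht', rfl⟩ := Finset.mem_image.mp htm
        rcases hA s' hs' t' ht' with h | h
        · exact Or.inl (List.cons_prefix_cons.mpr ⟨rfl, h⟩)
        · exact Or.inr (List.cons_prefix_cons.mpr ⟨rfl, h⟩)
      have hsumle := sum_le_treeNorm (c := c) hchain
      rw [Finset.sum_insert (by simp)] at hsumle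
      rw [Finset.sum_image (fun x _ y _ h => cons_inj b h)] at hsumle
      have heq : ∑ s ∈ A, |c (b :: s)| = ∑ s ∈ A, |cb s| :=
        Finset.sum_congr rfl fun s _ => by rw [hcb]
      rw [heq] at hsumle
      have : |c ([]:TreeNode)| = |a| := by rw [ha]
      linarith
    -- support bounds for subtrees
    have hsupb : ∀ (b : Bool) (cb : TreeNode →₀ ℝ), (∀ s, cb s = c (b :: s)) →
        ∀ t ∈ cb.support, t.length < N := by
      intro b cb hcb t ht
      have h1 : cb t ≠ 0 := Finsupp.mem_support_iff.mp ht
      have h2 : (b :: t) ∈ c.support := Finsupp.mem_support_iff.mpr (by rw [← hcb]; exact h1)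
      have := hs _ h2
      simpa using this
    obtain ⟨z0, hz0, hz0n, hz0le⟩ :=
      ih c0 (F.comp (Finsupp.lmapDomain ℝ ℝ (fun s : TreeNode => false :: s)))
        (hsupb false c0 hc0app)
    obtain ⟨z1, hz1, hz1n, hz1le⟩ :=
      ih c1 (F.comp (Finsupp.lmapDomain ℝ ℝ (fun s : TreeNode => true :: s)))
        (hsupb true c1 hc1app)
    simp only [LinearMap.comp_apply, Finsupp.lmapDomain_apply] at hz0n hz0le hz1n hz1le
    obtain ⟨zr, hzr, hzrn, hzrle⟩ := exists_root F
    set w := Finsupp.mapDomain (fun s : TreeNode => false :: s) z0 +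
             Finsupp.mapDomain (fun s : TreeNode => true :: s) z1 with hw
    have hGw : GoodP w := goodP_glue hz0 hz1
    have hFw : F w = F (Finsupp.mapDomain (fun s : TreeNode => false :: s) z0) +
        F (Finsupp.mapDomain (fun s : TreeNode => true :: s) z1) := by
      rw [hw, map_add]
    have hFwn : 0 ≤ F w := by rw [hFw]; exact add_nonneg hz0n hz1n
    -- F c expansion
    have hFc : F c = a * F (Finsupp.single ([]:TreeNode) 1) +
        (F (Finsupp.mapDomain (fun s : TreeNode => false :: s) c0) +
         F (Finsupp.mapDomain (fun s : TreeNode => true :: s) c1)) := by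
      conv_lhs => rw [hdec]
      rw [map_add, map_add]
      congr 1
      rw [show Finsupp.single ([]:TreeNode) a = a • Finsupp.single ([]:TreeNode) (1:ℝ) by
        rw [Finsupp.smul_single', mul_one], map_smul, smul_eq_mul]
    have hal : |a| ≤ treeNorm c := by
      have hchain : IsFinChain ({[]} : Finset TreeNode) := by
        intro s hsm t htm
        rw [Finset.mem_singleton] at hsm htm
        subst hsm; subst htm
        exact Or.inl List.nil_prefix
      have := sum_le_treeNorm (c := c) hchain
      rw [Finset.sum_singleton] at this
      rw [ha]
      exact this
    have h0le : F (Finsupp.mapDomain (fun s : TreeNode => false :: s) c0) ≤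
        (treeNorm c - |a|) * F (Finsupp.mapDomain (fun s : TreeNode => false :: s) z0) :=
      le_trans hz0le (mul_le_mul_of_nonneg_right (hsub false c0 hc0app) hz0n)
    have h1le : F (Finsupp.mapDomain (fun s : TreeNode => true :: s) c1) ≤
        (treeNorm c - |a|) * F (Finsupp.mapDomain (fun s : TreeNode => true :: s) z1) :=
      le_trans hz1le (mul_le_mul_of_nonneg_right (hsub true c1 hc1app) hz1n)
    have hstep : F c ≤ |a| * F zr + (treeNorm c - |a|) * F w := by
      have := hzrle a
      rw [hFc, hFw]
      have hw2 : (treeNorm c - |a|) * (F (Finsupp.mapDomain (fun s : TreeNode => false :: s) z0) +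
          F (Finsupp.mapDomain (fun s : TreeNode => true :: s) z1)) =
          (treeNorm c - |a|) * F (Finsupp.mapDomain (fun s : TreeNode => false :: s) z0) +
          (treeNorm c - |a|) * F (Finsupp.mapDomain (fun s : TreeNode => true :: s) z1) := by ring
      rw [hw2]
      linarith
    by_cases hcmp : F zr ≤ F w
    · refine ⟨w, hGw, hFwn, ?_⟩
      have h2 : |a| * F zr ≤ |a| * F w := mul_le_mul_of_nonneg_left hcmp (abs_nonneg a)
      have h3 : treeNorm c * F w = |a| * F w + (treeNorm c - |a|) * F w := by ring
      linarith
    · refine ⟨zr, hzr, hzrn, ?_⟩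
      have hcmp' : F w ≤ F zr := le_of_not_ge hcmp
      have h2 : (treeNorm c - |a|) * F w ≤ (treeNorm c - |a|) * F zr :=
        mul_le_mul_of_nonneg_left hcmp' (sub_nonneg.mpr hal)
      have h3 : treeNorm c * F zr = |a| * F zr + (treeNorm c - |a|) * F zr := by ring
      linarith

end BTaux


set_option maxHeartbeats 1000000 in
/-- **The binary tree space has the alternative Daugavet property:** for every `x` in the unit
sphere and every slice `S` of the closed unit ball,
`sup_{y ∈ S} max_{θ ∈ {-1,1}} ‖x + θ y‖ = 2`. -/
theorem binary_tree_alternative_daugavet {X : Type*} [NormedAddCommGroup X]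
    [NormedSpace ℝ X] [CompleteSpace X] (e : TreeNode → X)
    (hnorm : ∀ c : TreeNode →₀ ℝ, ‖c.sum fun t a => a • e t‖ = treeNorm c)
    (hdense : DenseRange fun c : TreeNode →₀ ℝ => c.sum fun t a => a • e t)
    (x : X) (hx : ‖x‖ = 1) (f : X →L[ℝ] ℝ) (δ : ℝ) (hδ : 0 < δ) :
    sSup ((fun y => max ‖x + y‖ ‖x - y‖) '' ballSlice (closedBall (0 : X) 1) f δ) = 2 := by
  classical
  set L := Finsupp.linearCombination ℝ e with hLdef
  have hLapp : ∀ c : TreeNode →₀ ℝ, L c = c.sum fun t a => a • e t :=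
    fun c => Finsupp.linearCombination_apply ℝ c
  have hn : ∀ c : TreeNode →₀ ℝ, ‖L c‖ = treeNorm c := fun c => by
    rw [hLapp]; exact hnorm c
  -- basic facts about the image of the ball
  have h0B : (0:X) ∈ closedBall (0:X) 1 := mem_closedBall_self zero_le_one
  have hne : (f '' closedBall (0:X) 1).Nonempty := ⟨f 0, 0, h0B, rfl⟩
  have hub' : ∀ r ∈ f '' closedBall (0:X) 1, r ≤ ‖f‖ := by
    rintro r ⟨y, hy, rfl⟩
    have hy1 : ‖y‖ ≤ 1 := mem_closedBall_zero_iff.mp hy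
    calc f y ≤ |f y| := le_abs_self _
      _ = ‖f y‖ := (Real.norm_eq_abs _).symm
      _ ≤ ‖f‖ * ‖y‖ := f.le_opNorm y
      _ ≤ ‖f‖ * 1 := mul_le_mul_of_nonneg_left hy1 (norm_nonneg f)
      _ = ‖f‖ := mul_one _
  have hbdd : BddAbove (f '' closedBall (0:X) 1) := ⟨‖f‖, hub'⟩
  set σ := sSup (f '' closedBall (0:X) 1) with hσdef
  obtain ⟨fy₀, hfy₀mem, hfy₀⟩ := exists_lt_of_lt_csSup hne
    (show σ - δ/2 < σ by linarith)
  obtain ⟨y₀, hy₀B, rfl⟩ := hfy₀mem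
  set ε' := δ / (4 * (‖f‖ + 1)) with hε'def
  have hε' : 0 < ε' := by positivity
  obtain ⟨c, hc⟩ := Metric.denseRange_iff.mp hdense y₀ ε' hε'
  have hcn : ‖L c - y₀‖ < ε' := by
    rw [norm_sub_rev, ← dist_eq_norm, hLapp c]; exact hc
  have hLc : ‖L c‖ ≤ 1 + ε' := by
    have h1 : ‖y₀‖ ≤ 1 := mem_closedBall_zero_iff.mp hy₀B
    calc ‖L c‖ = ‖(L c - y₀) + y₀‖ := by rw [sub_add_cancel]
      _ ≤ ‖L c - y₀‖ + ‖y₀‖ := norm_add_le _ _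
      _ ≤ 1 + ε' := by linarith
  have hfLc : f y₀ - ‖f‖ * ε' ≤ f (L c) := by
    have h2 : ‖y₀ - L c‖ ≤ ε' := by rw [norm_sub_rev]; exact le_of_lt hcn
    have h1 : f y₀ - f (L c) ≤ ‖f‖ * ε' :=
      calc f y₀ - f (L c) = f (y₀ - L c) := by rw [map_sub]
        _ ≤ |f (y₀ - L c)| := le_abs_self _
        _ = ‖f (y₀ - L c)‖ := (Real.norm_eq_abs _).symm
        _ ≤ ‖f‖ * ‖y₀ - L c‖ := f.le_opNorm _
        _ ≤ ‖f‖ * ε' := mul_le_mul_of_nonneg_left h2 (norm_nonneg f)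
    linarith
  -- apply the key convexity lemma
  set Fm : (TreeNode →₀ ℝ) →ₗ[ℝ] ℝ := (f : X →ₗ[ℝ] ℝ).comp L with hFmdef
  have hFmapp : ∀ c' : TreeNode →₀ ℝ, Fm c' = f (L c') := fun _ => rfl
  obtain ⟨z, hGz, hFzn, hFzle⟩ := BTaux.key_lemma ((c.support.sup List.length) + 1) c Fm
    (fun t ht => Nat.lt_succ_of_le (Finset.le_sup ht))
  rw [hFmapp] at hFzn
  rw [hFmapp, hFmapp] at hFzle
  have hzt : treeNorm z ≤ 1 := BTaux.treeNorm_le (fun A hA => hGz.1 A hA)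
  have hLz1 : ‖L z‖ ≤ 1 := by rw [hn]; exact hzt
  have hfLz_le : f (L z) ≤ ‖f‖ :=
    calc f (L z) ≤ |f (L z)| := le_abs_self _
      _ = ‖f (L z)‖ := (Real.norm_eq_abs _).symm
      _ ≤ ‖f‖ * ‖L z‖ := f.le_opNorm _
      _ ≤ ‖f‖ * 1 := mul_le_mul_of_nonneg_left hLz1 (norm_nonneg f)
      _ = ‖f‖ := mul_one _
  have hεn : 2 * ε' * ‖f‖ < δ / 2 := by
    have hem : ε' * (4 * (‖f‖ + 1)) = δ := by
      rw [hε'def]; exact div_mul_cancel₀ δ (by positivity)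
    nlinarith [hε', norm_nonneg f]
  have hfLz : σ - δ < f (L z) := by
    have h5 : treeNorm c * f (L z) ≤ (1 + ε') * f (L z) :=
      mul_le_mul_of_nonneg_right (by rw [← hn]; exact hLc) hFzn
    have h6 : ε' * f (L z) ≤ ε' * ‖f‖ :=
      mul_le_mul_of_nonneg_left hfLz_le (le_of_lt hε')
    have h7 : (1 + ε') * f (L z) = f (L z) + ε' * f (L z) := by ring
    linarith
  have hmem : L z ∈ ballSlice (closedBall (0:X) 1) f δ := by
    refine ⟨mem_closedBall_zero_iff.mpr hLz1, ?_⟩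
    rw [← hσdef]
    linarith
  -- the lower bound via chains
  have hxbound : ∀ ε : ℝ, 0 < ε → 2 - ε ≤ max ‖x + L z‖ ‖x - L z‖ := by
    intro ε hε
    obtain ⟨d, hd⟩ := Metric.denseRange_iff.mp hdense x (ε/4) (by linarith)
    have hdn : ‖L d - x‖ < ε/4 := by
      rw [norm_sub_rev, ← dist_eq_norm, hLapp d]; exact hd
    have hdL : 1 - ε/4 < ‖L d‖ := by
      have h1 : ‖x‖ - ‖L d‖ ≤ ‖x - L d‖ := norm_sub_norm_le x (L d)
      rw [norm_sub_rev] at h1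
      rw [hx] at h1
      linarith
    have hdt : 1 - ε/4 < treeNorm d := by rw [← hn]; exact hdL
    obtain ⟨r, hrmem, hr⟩ := exists_lt_of_lt_csSup
      (⟨0, BTaux.zero_mem_chainSums d⟩ : (BTaux.chainSums d).Nonempty)
      (show treeNorm d - ε/4 < sSup (BTaux.chainSums d) by
        rw [← BTaux.treeNorm_eq]; linarith)
    obtain ⟨A, hA, rfl⟩ := hrmem
    obtain ⟨t₀, ht₀c, ht₀v⟩ := hGz.2 A hA
    obtain ⟨θ, hθabs, hθsign, hθcases⟩ :
        ∃ θ : ℝ, |θ| = 1 ∧ 0 ≤ d t₀ * (θ * z t₀) ∧ (θ = 1 ∨ θ = -1) := by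
      rcases le_or_gt 0 (d t₀ * z t₀) with h | h
      · exact ⟨1, by norm_num, by simpa using h, Or.inl rfl⟩
      · exact ⟨-1, by norm_num, by nlinarith, Or.inr rfl⟩
    have hBchain : IsFinChain (insert t₀ A) := by
      intro s hsm t htm
      rcases Finset.mem_insert.mp hsm with h1 | h1
      · rcases Finset.mem_insert.mp htm with h2 | h2
        · rw [h1, h2]
          exact Or.inl (List.prefix_refl _)
        · rw [h1]
          rcases ht₀c t h2 with h | h
          · exact Or.inr h
          · exact Or.inl h
      · rcases Finset.mem_insert.mp htm with h2 | h2
        · rw [h2]; exact ht₀c s h1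
        · exact hA s h1 t h2
    have hzvanish : ∀ t ∈ (insert t₀ A), t ≠ t₀ → z t = 0 := by
      have hsum1 : ∑ t ∈ (insert t₀ A), |z t| ≤ 1 := hGz.1 (insert t₀ A) hBchain
      have hsplit : |z t₀| + ∑ t ∈ (insert t₀ A).erase t₀, |z t| = ∑ t ∈ (insert t₀ A), |z t| :=
        Finset.add_sum_erase (insert t₀ A) (fun t => |z t|) (Finset.mem_insert_self t₀ A)
      have hz0 : ∑ t ∈ (insert t₀ A).erase t₀, |z t| ≤ 0 := by rw [ht₀v] at hsplit; linarith
      intro t htB htne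
      have htmem : t ∈ (insert t₀ A).erase t₀ := Finset.mem_erase.mpr ⟨htne, htB⟩
      have hall0 := (Finset.sum_eq_zero_iff_of_nonneg
        (fun i _ => abs_nonneg (z i))).mp
        (le_antisymm hz0 (Finset.sum_nonneg fun i _ => abs_nonneg _)) t htmem
      exact abs_eq_zero.mp hall0
    have happly : ∀ t : TreeNode, (d + θ • z) t = d t + θ * z t := by
      intro t; rw [Finsupp.add_apply, Finsupp.smul_apply, smul_eq_mul]
    have hsumB : ∑ t ∈ (insert t₀ A), |(d + θ • z) t| = (∑ t ∈ (insert t₀ A), |d t|) + 1 := by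
      have h1 : |(d + θ • z) t₀| + ∑ t ∈ (insert t₀ A).erase t₀, |(d + θ • z) t| =
          ∑ t ∈ (insert t₀ A), |(d + θ • z) t| :=
        Finset.add_sum_erase (insert t₀ A) (fun t => |(d + θ • z) t|)
          (Finset.mem_insert_self t₀ A)
      have h2 : ∑ t ∈ (insert t₀ A).erase t₀, |(d + θ • z) t| = ∑ t ∈ (insert t₀ A).erase t₀, |d t| := by
        refine Finset.sum_congr rfl fun t ht => ?_
        have hzv := hzvanish t (Finset.mem_of_mem_erase ht) (Finset.ne_of_mem_erase ht)
        rw [happly, hzv, mul_zero, add_zero]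
      have h3 : |(d + θ • z) t₀| = |d t₀| + 1 := by
        rw [happly, BTaux.abs_add_same_sign hθsign, abs_mul, hθabs, ht₀v, one_mul]
      have h4 : |d t₀| + ∑ t ∈ (insert t₀ A).erase t₀, |d t| = ∑ t ∈ (insert t₀ A), |d t| :=
        Finset.add_sum_erase (insert t₀ A) (fun t => |d t|) (Finset.mem_insert_self t₀ A)
      rw [← h1, h2, h3]
      linarith
    have hsumA : ∑ t ∈ A, |d t| ≤ ∑ t ∈ (insert t₀ A), |d t| :=
      Finset.sum_le_sum_of_subset_of_nonneg (Finset.subset_insert _ _)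
        (fun t _ _ => abs_nonneg _)
    have htn : 2 - ε/2 - ε/4 ≤ treeNorm (d + θ • z) := by
      have h5 := BTaux.sum_le_treeNorm (c := d + θ • z) hBchain
      rw [hsumB] at h5
      linarith
    have hnormeq : ‖L d + θ • L z‖ = treeNorm (d + θ • z) := by
      rw [← map_smul, ← map_add, hn]
    have hfinal : 2 - ε ≤ ‖x + θ • L z‖ := by
      have heq : L d + θ • L z = (x + θ • L z) + (L d - x) := by abel
      have htri : ‖L d + θ • L z‖ ≤ ‖x + θ • L z‖ + ‖L d - x‖ := by
        rw [heq]; exact norm_add_le _ _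
      rw [hnormeq] at htri
      linarith
    rcases hθcases with h1 | h1
    · rw [h1, one_smul] at hfinal
      exact le_trans hfinal (le_max_left _ _)
    · rw [h1, neg_one_smul] at hfinal
      have heq2 : x + -(L z) = x - L z := by abel
      rw [heq2] at hfinal
      exact le_trans hfinal (le_max_right _ _)
  have hge2 : 2 ≤ max ‖x + L z‖ ‖x - L z‖ := by
    refine le_of_forall_pos_le_add ?_
    intro ε hε
    linarith [hxbound ε hε]
  -- conclude
  have hub2 : ∀ r ∈ (fun y => max ‖x + y‖ ‖x - y‖) '' ballSlice (closedBall (0:X) 1) f δ,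
      r ≤ 2 := by
    rintro r ⟨y, hy, rfl⟩
    have hy1 : ‖y‖ ≤ 1 := mem_closedBall_zero_iff.mp hy.1
    have h1 : ‖x + y‖ ≤ 2 := by
      have := norm_add_le x y
      rw [hx] at this; linarith
    have h2 : ‖x - y‖ ≤ 2 := by
      have := norm_sub_le x y
      rw [hx] at this; linarith
    exact max_le h1 h2
  have hSSne : ((fun y => max ‖x + y‖ ‖x - y‖) ''
      ballSlice (closedBall (0:X) 1) f δ).Nonempty := ⟨_, L z, hmem, rfl⟩
  have hle : sSup ((fun y => max ‖x + y‖ ‖x - y‖) ''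
      ballSlice (closedBall (0:X) 1) f δ) ≤ 2 := csSup_le hSSne hub2
  have hgemem : max ‖x + L z‖ ‖x - L z‖ ∈
      (fun y => max ‖x + y‖ ‖x - y‖) '' ballSlice (closedBall (0:X) 1) f δ :=
    ⟨L z, hmem, rfl⟩
  have hge : 2 ≤ sSup ((fun y => max ‖x + y‖ ‖x - y‖) ''
      ballSlice (closedBall (0:X) 1) f δ) :=
    le_trans hge2 (le_csSup ⟨2, hub2⟩ hgemem)
  linarith
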